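/- arXiv:2604.03894 — 3 statements merged into one kernel-verified Lean document; each statement's English description precedes it below -/
import Mathlib

section
/- Let f = (f_ij) be a real symmetric 4×4 matrix and define the 3×3 real matrix C by C = [[(−f₁₁−f₂₂+f₃₃+f₄₄)/2, f₁₄−f₂₃, −f₁₃−f₂₄], [−f₁₄−f₂₃, (−f₁₁+f₂₂−f₃₃+f₄₄)/2, f₁₂−f₃₄], [f₁₃−f₂₄, −f₁₂−f₃₄, (−f₁₁+f₂₂+f₃₃−f₄₄)/2]]. Then tr(C Cᵀ) = Σ_{i=1}^{4} (f_ii − (tr f)/4)² + 2 Σ_{1≤i<j≤4} f_ij², which equals the squared Frobenius norm of the trace-free part f − ((tr f)/4)·I₄ of f. -/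
open Matrix

/-- For a symmetric 4×4 real matrix `f`, the matrix `C` built from its entries satisfies
`tr(C Cᵀ) = Σᵢ (fᵢᵢ − (tr f)/4)² + 2 Σ_{i<j} fᵢⱼ²`, which equals the squared Frobenius
norm of the trace-free part `f − ((tr f)/4)·I` of `f`. -/
theorem stmt3 (f : Matrix (Fin 4) (Fin 4) ℝ) (hf : f.IsSymm)
    (C : Matrix (Fin 3) (Fin 3) ℝ)
    (hC : C = !![(-f 0 0 - f 1 1 + f 2 2 + f 3 3) / 2, f 0 3 - f 1 2, -(f 0 2) - f 1 3;
                 -(f 0 3) - f 1 2, (-f 0 0 + f 1 1 - f 2 2 + f 3 3) / 2, f 0 1 - f 2 3;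
                 f 0 2 - f 1 3, -(f 0 1) - f 2 3, (-f 0 0 + f 1 1 + f 2 2 - f 3 3) / 2]) :
    (C * Cᵀ).trace
      = (∑ i : Fin 4, (f i i - f.trace / 4) ^ 2)
        + 2 * ∑ i : Fin 4, ∑ j ∈ Finset.Ioi i, f i j ^ 2 ∧
    (∑ i : Fin 4, (f i i - f.trace / 4) ^ 2)
        + 2 * ∑ i : Fin 4, ∑ j ∈ Finset.Ioi i, f i j ^ 2
      = ∑ i : Fin 4, ∑ j : Fin 4, (f - (f.trace / 4) • (1 : Matrix (Fin 4) (Fin 4) ℝ)) i j ^ 2 := by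
  have h : ∀ i j, f j i = f i j := fun i j => congrFun (congrFun hf i) j
  subst hC
  have hIoi : ∀ g : Fin 4 → Fin 4 → ℝ, (∑ i : Fin 4, ∑ j ∈ Finset.Ioi i, g i j)
      = g 0 1 + g 0 2 + g 0 3 + g 1 2 + g 1 3 + g 2 3 := by
    intro g
    have e0 : Finset.Ioi (0:Fin 4) = {1,2,3} := by decide
    have e1 : Finset.Ioi (1:Fin 4) = {2,3} := by decide
    have e2 : Finset.Ioi (2:Fin 4) = {3} := by decide
    have e3 : Finset.Ioi (3:Fin 4) = ∅ := by decide
    rw [Fin.sum_univ_four, e0, e1, e2, e3]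
    simp [Finset.sum_insert, Finset.mem_insert]
    ring
  constructor <;>
  · simp only [Matrix.trace, Matrix.mul_apply, Matrix.transpose_apply, Matrix.diag,
      Fin.sum_univ_four, Fin.sum_univ_three, hIoi, Matrix.sub_apply, Matrix.smul_apply,
      Matrix.one_apply, Matrix.cons_val', Matrix.cons_val_zero, Matrix.cons_val_one,
      Matrix.head_cons, Matrix.empty_val', Matrix.cons_val_fin_one, Matrix.head_fin_const,
      Matrix.of_apply, Matrix.cons_val]
    try simp (config := { decide := true }) only [↓reduceIte]
    norm_num [h 0 1, h 0 2, h 0 3, h 1 2, h 1 3, h 2 3, Fin.ext_iff, Fin.val_natCast]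
    ring
end

section
/- The obstruction vectors satisfy the identity |𝒪₁|² + |𝒪₂|² + |𝒪₃|² = ½ Σ_{1≤i<j≤4} f_ij². -/
open scoped RealInnerProductSpace

/-- The pairs `(i,j)`, `i < j`, indexing the orthonormal bivector basis
`e₁∧e₂, e₁∧e₃, e₁∧e₄, e₂∧e₃, e₂∧e₄, e₃∧e₄` of `Λ²(ℝ⁴) ≅ ℝ⁶`. -/
def pairIdx : Fin 6 → Fin 4 × Fin 4 :=
  ![(0, 1), (0, 2), (0, 3), (1, 2), (1, 3), (2, 3)]

/-- The bivector basis vectors of `Λ² ≅ ℝ⁶`. -/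
noncomputable def bvec (m : Fin 6) : EuclideanSpace ℝ (Fin 6) :=
  EuclideanSpace.single m 1

/-- Kronecker delta on `Fin 4`. -/
def kdelta (i j : Fin 4) : ℝ := if i = j then 1 else 0

/-- `P₁ = e₁∧e₂`, `P₂ = e₁∧e₃`, `P₃ = e₁∧e₄`. -/
noncomputable def Pvec : Fin 3 → EuclideanSpace ℝ (Fin 6) :=
  ![bvec 0, bvec 1, bvec 2]

/-- `*P₁ = e₃∧e₄`, `*P₂ = −e₂∧e₄`, `*P₃ = e₂∧e₃` (Hodge star images). -/
noncomputable def PvecStar : Fin 3 → EuclideanSpace ℝ (Fin 6) :=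
  ![bvec 5, -bvec 4, bvec 3]

/-- The statement that `H` is the operator `Ĥ` on `Λ² ≅ ℝ⁶` determined by
`⟨Ĥ(e_i∧e_j), e_k∧e_l⟩ = f_il δ_jk + f_jk δ_il − f_ik δ_jl − f_jl δ_ik`. -/
def IsHhat (f : Matrix (Fin 4) (Fin 4) ℝ)
    (H : EuclideanSpace ℝ (Fin 6) →ₗ[ℝ] EuclideanSpace ℝ (Fin 6)) : Prop :=
  ∀ m n : Fin 6,
    ⟪H (bvec m), bvec n⟫ =
      f (pairIdx m).1 (pairIdx n).2 * kdelta (pairIdx m).2 (pairIdx n).1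
      + f (pairIdx m).2 (pairIdx n).1 * kdelta (pairIdx m).1 (pairIdx n).2
      - f (pairIdx m).1 (pairIdx n).1 * kdelta (pairIdx m).2 (pairIdx n).2
      - f (pairIdx m).2 (pairIdx n).2 * kdelta (pairIdx m).1 (pairIdx n).1

/-- The obstruction vector `𝒪ᵢ`: the orthogonal projection of `½·Ĥ(Pᵢ)` onto the
orthogonal complement of `span{Pᵢ, *Pᵢ}` in `ℝ⁶`. -/
noncomputable def Ovec (H : EuclideanSpace ℝ (Fin 6) →ₗ[ℝ] EuclideanSpace ℝ (Fin 6))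
    (i : Fin 3) : (Submodule.span ℝ {Pvec i, PvecStar i})ᗮ :=
  Submodule.orthogonalProjectionOnto (Submodule.span ℝ {Pvec i, PvecStar i})ᗮ ((1 / 2 : ℝ) • H (Pvec i))



section vec6
variable {α : Type*} (a b c d e g : α)
lemma v6_0 : (![a,b,c,d,e,g] : Fin 6 → α) 0 = a := rfl
lemma v6_1 : (![a,b,c,d,e,g] : Fin 6 → α) 1 = b := rfl
lemma v6_2 : (![a,b,c,d,e,g] : Fin 6 → α) 2 = c := rfl
lemma v6_3 : (![a,b,c,d,e,g] : Fin 6 → α) 3 = d := rfl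
lemma v6_4 : (![a,b,c,d,e,g] : Fin 6 → α) 4 = e := rfl
lemma v6_5 : (![a,b,c,d,e,g] : Fin 6 → α) 5 = g := rfl
end vec6

lemma proj_span_pair_eq {E : Type*} [NormedAddCommGroup E] [InnerProductSpace ℝ E]
    [FiniteDimensional ℝ E] (a b u y : E)
    (h1 : ⟪a, y⟫ = 0) (h2 : ⟪b, y⟫ = 0) (hz : u - y ∈ Submodule.span ℝ {a, b}) :
    ((Submodule.orthogonalProjectionOnto (Submodule.span ℝ {a, b})ᗮ u : E)) = y := by
  rw [← Submodule.starProjection_apply]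
  apply Submodule.eq_starProjection_of_mem_orthogonal' (v := y) (z := u - y)
  · intro w hw
    induction hw using Submodule.span_induction with
    | mem x hx =>
        rcases hx with h | h
        · subst h; exact h1
        · simp only [Set.mem_singleton_iff] at h; subst h; exact h2
    | zero => simp
    | add x y hx hy ihx ihy => rw [inner_add_left, ihx, ihy]; ring
    | smul c x hx ih => rw [inner_smul_left, ih]; ring
  · exact Submodule.le_orthogonal_orthogonal _ hz
  · abel

/-- The obstruction vectors satisfy `|𝒪₁|² + |𝒪₂|² + |𝒪₃|² = ½ Σ_{i<j} fᵢⱼ²`. -/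
theorem stmt6 (f : Matrix (Fin 4) (Fin 4) ℝ) (hf : f.IsSymm)
    (H : EuclideanSpace ℝ (Fin 6) →ₗ[ℝ] EuclideanSpace ℝ (Fin 6)) (hH : IsHhat f H) :
    ‖Ovec H 0‖ ^ 2 + ‖Ovec H 1‖ ^ 2 + ‖Ovec H 2‖ ^ 2
      = (1 / 2) * ∑ i : Fin 4, ∑ j ∈ Finset.Ioi i, f i j ^ 2 := by
  have hc : ∀ m n : Fin 6, H (bvec m) n =
      f (pairIdx m).1 (pairIdx n).2 * kdelta (pairIdx m).2 (pairIdx n).1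
      + f (pairIdx m).2 (pairIdx n).1 * kdelta (pairIdx m).1 (pairIdx n).2
      - f (pairIdx m).1 (pairIdx n).1 * kdelta (pairIdx m).2 (pairIdx n).2
      - f (pairIdx m).2 (pairIdx n).2 * kdelta (pairIdx m).1 (pairIdx n).1 := by
    intro m n
    have := hH m n
    rw [show bvec n = EuclideanSpace.single n (1:ℝ) from rfl,
      EuclideanSpace.inner_single_right] at this
    simpa using this
  have e0 : ((Ovec H 0 : EuclideanSpace ℝ (Fin 6))) = ((WithLp.equiv 2 (Fin 6 → ℝ)).symm ![0, -f 1 2/2, -f 1 3/2, f 0 2/2, f 0 3/2, 0]) := by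
    apply proj_span_pair_eq
    · show (⟪bvec 0, ((WithLp.equiv 2 (Fin 6 → ℝ)).symm ![0, -f 1 2/2, -f 1 3/2, f 0 2/2, f 0 3/2, 0])⟫) = 0
      simp [bvec, WithLp.equiv_symm_apply, PiLp.toLp_apply, v6_0, v6_1, v6_2, v6_3, v6_4, v6_5, EuclideanSpace.inner_single_left]
    · show (⟪bvec 5, ((WithLp.equiv 2 (Fin 6 → ℝ)).symm ![0, -f 1 2/2, -f 1 3/2, f 0 2/2, f 0 3/2, 0])⟫) = 0
      simp [bvec, WithLp.equiv_symm_apply, PiLp.toLp_apply, v6_0, v6_1, v6_2, v6_3, v6_4, v6_5, EuclideanSpace.inner_single_left]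
    · rw [Submodule.mem_span_pair]
      refine ⟨-(f 0 0 + f 1 1)/2, 0, ?_⟩
      show _ = (1/2 : ℝ) • H (bvec 0) - ((WithLp.equiv 2 (Fin 6 → ℝ)).symm ![0, -f 1 2/2, -f 1 3/2, f 0 2/2, f 0 3/2, 0])
      ext n
      have h := hc 0 n
      clear hc
      fin_cases n <;>
        simp_all [pairIdx, kdelta, bvec, Pvec, PvecStar,
          EuclideanSpace.single_apply, WithLp.equiv_symm_apply, PiLp.toLp_apply,
          v6_0, v6_1, v6_2, v6_3, v6_4, v6_5] <;> ring
  have e1 : ((Ovec H 1 : EuclideanSpace ℝ (Fin 6))) = ((WithLp.equiv 2 (Fin 6 → ℝ)).symm ![-f 2 1/2, 0, -f 2 3/2, -f 0 1/2, 0, f 0 3/2]) := by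
    apply proj_span_pair_eq
    · show (⟪bvec 1, ((WithLp.equiv 2 (Fin 6 → ℝ)).symm ![-f 2 1/2, 0, -f 2 3/2, -f 0 1/2, 0, f 0 3/2])⟫) = 0
      simp [bvec, WithLp.equiv_symm_apply, PiLp.toLp_apply, v6_0, v6_1, v6_2, v6_3, v6_4, v6_5, EuclideanSpace.inner_single_left]
    · show (⟪-bvec 4, ((WithLp.equiv 2 (Fin 6 → ℝ)).symm ![-f 2 1/2, 0, -f 2 3/2, -f 0 1/2, 0, f 0 3/2])⟫) = 0
      simp [bvec, WithLp.equiv_symm_apply, PiLp.toLp_apply, v6_0, v6_1, v6_2, v6_3, v6_4, v6_5, EuclideanSpace.inner_single_left]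
    · rw [Submodule.mem_span_pair]
      refine ⟨-(f 0 0 + f 2 2)/2, 0, ?_⟩
      show _ = (1/2 : ℝ) • H (bvec 1) - ((WithLp.equiv 2 (Fin 6 → ℝ)).symm ![-f 2 1/2, 0, -f 2 3/2, -f 0 1/2, 0, f 0 3/2])
      ext n
      have h := hc 1 n
      clear hc
      fin_cases n <;>
        simp_all [pairIdx, kdelta, bvec, Pvec, PvecStar,
          EuclideanSpace.single_apply, WithLp.equiv_symm_apply, PiLp.toLp_apply,
          v6_0, v6_1, v6_2, v6_3, v6_4, v6_5] <;> ring
  have e2 : ((Ovec H 2 : EuclideanSpace ℝ (Fin 6))) = ((WithLp.equiv 2 (Fin 6 → ℝ)).symm ![-f 3 1/2, -f 3 2/2, 0, 0, -f 0 1/2, -f 0 2/2]) := by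
    apply proj_span_pair_eq
    · show (⟪bvec 2, ((WithLp.equiv 2 (Fin 6 → ℝ)).symm ![-f 3 1/2, -f 3 2/2, 0, 0, -f 0 1/2, -f 0 2/2])⟫) = 0
      simp [bvec, WithLp.equiv_symm_apply, PiLp.toLp_apply, v6_0, v6_1, v6_2, v6_3, v6_4, v6_5, EuclideanSpace.inner_single_left]
    · show (⟪bvec 3, ((WithLp.equiv 2 (Fin 6 → ℝ)).symm ![-f 3 1/2, -f 3 2/2, 0, 0, -f 0 1/2, -f 0 2/2])⟫) = 0
      simp [bvec, WithLp.equiv_symm_apply, PiLp.toLp_apply, v6_0, v6_1, v6_2, v6_3, v6_4, v6_5, EuclideanSpace.inner_single_left]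
    · rw [Submodule.mem_span_pair]
      refine ⟨-(f 0 0 + f 3 3)/2, 0, ?_⟩
      show _ = (1/2 : ℝ) • H (bvec 2) - ((WithLp.equiv 2 (Fin 6 → ℝ)).symm ![-f 3 1/2, -f 3 2/2, 0, 0, -f 0 1/2, -f 0 2/2])
      ext n
      have h := hc 2 n
      clear hc
      fin_cases n <;>
        simp_all [pairIdx, kdelta, bvec, Pvec, PvecStar,
          EuclideanSpace.single_apply, WithLp.equiv_symm_apply, PiLp.toLp_apply,
          v6_0, v6_1, v6_2, v6_3, v6_4, v6_5] <;> ring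
  have hsym : ∀ i j, f j i = f i j := fun i j => hf.apply i j
  have n0 : ‖Ovec H 0‖ ^ 2 = ⟪((WithLp.equiv 2 (Fin 6 → ℝ)).symm ![0, -f 1 2/2, -f 1 3/2, f 0 2/2, f 0 3/2, 0]), ((WithLp.equiv 2 (Fin 6 → ℝ)).symm ![0, -f 1 2/2, -f 1 3/2, f 0 2/2, f 0 3/2, 0])⟫ := by
    rw [← e0, real_inner_self_eq_norm_sq]; rfl
  have n1 : ‖Ovec H 1‖ ^ 2 = ⟪((WithLp.equiv 2 (Fin 6 → ℝ)).symm ![-f 2 1/2, 0, -f 2 3/2, -f 0 1/2, 0, f 0 3/2]), ((WithLp.equiv 2 (Fin 6 → ℝ)).symm ![-f 2 1/2, 0, -f 2 3/2, -f 0 1/2, 0, f 0 3/2])⟫ := by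
    rw [← e1, real_inner_self_eq_norm_sq]; rfl
  have n2 : ‖Ovec H 2‖ ^ 2 = ⟪((WithLp.equiv 2 (Fin 6 → ℝ)).symm ![-f 3 1/2, -f 3 2/2, 0, 0, -f 0 1/2, -f 0 2/2]), ((WithLp.equiv 2 (Fin 6 → ℝ)).symm ![-f 3 1/2, -f 3 2/2, 0, 0, -f 0 1/2, -f 0 2/2])⟫ := by
    rw [← e2, real_inner_self_eq_norm_sq]; rfl
  rw [n0, n1, n2]
  simp only [PiLp.inner_apply, RCLike.inner_apply, conj_trivial,
    Fin.sum_univ_six, WithLp.equiv_symm_apply, PiLp.toLp_apply, v6_0, v6_1, v6_2, v6_3, v6_4, v6_5]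
  have hI0 : Finset.Ioi (0:Fin 4) = {1,2,3} := by decide
  have hI1 : Finset.Ioi (1:Fin 4) = {2,3} := by decide
  have hI2 : Finset.Ioi (2:Fin 4) = {3} := by decide
  have hI3 : Finset.Ioi (3:Fin 4) = ∅ := by decide
  rw [Fin.sum_univ_four, hI0, hI1, hI2, hI3]
  rw [Finset.sum_insert (by decide), Finset.sum_insert (by decide),
    Finset.sum_insert (by decide), Finset.sum_singleton, Finset.sum_singleton,
    Finset.sum_empty, hsym 1 2, hsym 1 3, hsym 2 3]
  norm_num [Matrix.cons_val_zero, Matrix.cons_val_one]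
  ring
end

section
/- For each i = 1,2,3, the orthogonal projection of ½·Ĥ(*Pᵢ) onto the orthogonal complement of span{Pᵢ, *Pᵢ} has the same squared norm as 𝒪ᵢ; in particular, this projection vanishes if and only if 𝒪ᵢ = 0. (Thus the same off-diagonal entries of f that obstruct Pᵢ also obstruct *Pᵢ.) -/
open scoped RealInnerProductSpace
set_option maxHeartbeats 1000000

lemma proj_compl_span_pair {E : Type*} [NormedAddCommGroup E] [InnerProductSpace ℝ E]
    [FiniteDimensional ℝ E] (P Q v : E)
    (hP : ⟪P, P⟫ = 1) (hQ : ⟪Q, Q⟫ = 1) (hPQ : ⟪P, Q⟫ = 0) :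
    ((Submodule.orthogonalProjectionOnto (Submodule.span ℝ {P, Q})ᗮ v : E)) =
      v - ⟪v, P⟫ • P - ⟪v, Q⟫ • Q := by
  have h1 : (⟪v, P⟫ • P + ⟪v, Q⟫ • Q) ∈ Submodule.span ℝ {P, Q} :=
    Submodule.add_mem _
      (Submodule.smul_mem _ _ (Submodule.subset_span (by simp)))
      (Submodule.smul_mem _ _ (Submodule.subset_span (by simp)))
  have h2 : v - (⟪v, P⟫ • P + ⟪v, Q⟫ • Q) ∈ (Submodule.span ℝ {P, Q})ᗮ := by
    rw [Submodule.mem_orthogonal]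
    intro u hu
    induction hu using Submodule.span_induction with
    | mem x hx =>
      rcases hx with rfl | rfl <;>
        simp [inner_sub_right, inner_add_right, inner_smul_right, hP, hQ, hPQ,
          real_inner_comm v] <;>
        rw [real_inner_self_eq_norm_sq] at hP hQ <;>
        simp [real_inner_comm, hPQ, hP, hQ]
    | zero => simp
    | add x y _ _ hx hy => rw [inner_add_left, hx, hy]; ring
    | smul a x _ hx => rw [real_inner_smul_left, hx]; ring
  rw [← Submodule.starProjection_apply, Submodule.starProjection_orthogonal_val,
    Submodule.eq_starProjection_of_mem_orthogonal h1 (by simpa using h2)]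
  abel

lemma eq_zero_iff_of_norm_sq_eq {E F : Type*} [NormedAddCommGroup E] [NormedAddCommGroup F]
    (x : E) (y : F) (h : ‖x‖ ^ 2 = ‖y‖ ^ 2) : x = 0 ↔ y = 0 := by
  rw [← norm_eq_zero (a := x), ← norm_eq_zero (a := y), ← sq_eq_zero_iff (a := ‖x‖),
    ← sq_eq_zero_iff (a := ‖y‖), h]

/-- For each `i`, the orthogonal projection of `½·Ĥ(*Pᵢ)` onto the orthogonal complement of
`span{Pᵢ, *Pᵢ}` has the same squared norm as `𝒪ᵢ`; in particular it vanishes iff `𝒪ᵢ = 0`. -/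
theorem stmt8 (f : Matrix (Fin 4) (Fin 4) ℝ) (hf : f.IsSymm)
    (H : EuclideanSpace ℝ (Fin 6) →ₗ[ℝ] EuclideanSpace ℝ (Fin 6)) (hH : IsHhat f H) :
    ∀ i : Fin 3,
      ‖Submodule.orthogonalProjectionOnto (Submodule.span ℝ {Pvec i, PvecStar i})ᗮ
          ((1 / 2 : ℝ) • H (PvecStar i))‖ ^ 2 = ‖Ovec H i‖ ^ 2 ∧
      (Submodule.orthogonalProjectionOnto (Submodule.span ℝ {Pvec i, PvecStar i})ᗮ
          ((1 / 2 : ℝ) • H (PvecStar i)) = 0 ↔ Ovec H i = 0) := by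
  have hc : ∀ m n : Fin 6, H (bvec m) n =
      f (pairIdx m).1 (pairIdx n).2 * kdelta (pairIdx m).2 (pairIdx n).1
      + f (pairIdx m).2 (pairIdx n).1 * kdelta (pairIdx m).1 (pairIdx n).2
      - f (pairIdx m).1 (pairIdx n).1 * kdelta (pairIdx m).2 (pairIdx n).2
      - f (pairIdx m).2 (pairIdx n).2 * kdelta (pairIdx m).1 (pairIdx n).1 := by
    intro m n
    simpa [bvec, EuclideanSpace.inner_single_right] using hH m n
  have hsym : ∀ a b : Fin 4, f a b = f b a := fun a b => hf.apply b a
  have hbv : ∀ (v : EuclideanSpace ℝ (Fin 6)) (k : Fin 6), ⟪v, bvec k⟫ = v k := by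
    intro v k; simp [bvec, EuclideanSpace.inner_single_right]
  have hbc : ∀ k n : Fin 6, bvec k n = if n = k then 1 else 0 := by
    intro k n; simp [bvec, EuclideanSpace.single_apply]
  have hp0 : pairIdx 0 = (0,1) := by decide
  have hp1 : pairIdx 1 = (0,2) := by decide
  have hp2 : pairIdx 2 = (0,3) := by decide
  have hp3 : pairIdx 3 = (1,2) := by decide
  have hp4 : pairIdx 4 = (1,3) := by decide
  have hp5 : pairIdx 5 = (2,3) := by decide
  intro i
  have key : ‖Submodule.orthogonalProjectionOnto (Submodule.span ℝ {Pvec i, PvecStar i})ᗮ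
        ((1 / 2 : ℝ) • H (PvecStar i))‖ ^ 2 = ‖Ovec H i‖ ^ 2 := by
    rw [Ovec, Submodule.coe_norm, Submodule.coe_norm]
    rw [← Submodule.starProjection_apply, ← Submodule.starProjection_apply]
    fin_cases i <;>
    · simp only [Pvec, PvecStar, Matrix.cons_val_zero, Matrix.cons_val_one, Matrix.head_cons,
        Matrix.cons_val_two, Matrix.tail_cons, Fin.reduceFinMk, Fin.zero_eta, Fin.mk_one,
        Fin.isValue]
      rw [Submodule.starProjection_apply, Submodule.starProjection_apply]
      rw [proj_compl_span_pair _ _ _ (by simp [bvec, EuclideanSpace.inner_single_left,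
            EuclideanSpace.single_apply])
          (by simp [bvec, EuclideanSpace.inner_single_left, EuclideanSpace.single_apply])
          (by simp [bvec, EuclideanSpace.inner_single_left, EuclideanSpace.single_apply]),
        proj_compl_span_pair _ _ _ (by simp [bvec, EuclideanSpace.inner_single_left,
            EuclideanSpace.single_apply])
          (by simp [bvec, EuclideanSpace.inner_single_left, EuclideanSpace.single_apply])
          (by simp [bvec, EuclideanSpace.inner_single_left, EuclideanSpace.single_apply]),
        ← real_inner_self_eq_norm_sq, ← real_inner_self_eq_norm_sq]
      simp only [map_neg, map_smul, inner_neg_left, inner_neg_right, inner_smul_left,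
        inner_smul_right, conj_trivial, hbv, PiLp.inner_apply, RCLike.inner_apply,
        Fin.sum_univ_six, PiLp.sub_apply, PiLp.smul_apply, PiLp.neg_apply, smul_eq_mul,
        Fin.zero_eta, Fin.mk_one, Fin.reduceFinMk, Matrix.cons_val_zero, Matrix.cons_val_one,
        Matrix.head_cons, Matrix.cons_val_two, Matrix.tail_cons, Fin.isValue]
      simp only [hc, hbc]
      simp [kdelta, hp0, hp1, hp2, hp3, hp4, hp5]
      try simp only [hsym 1 0, hsym 2 0, hsym 3 0, hsym 2 1, hsym 3 1, hsym 3 2]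
      try ring
  exact ⟨key, eq_zero_iff_of_norm_sq_eq _ _ key⟩
end
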